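/- arXiv:2306.00833 — 2 statements merged into one kernel-verified Lean document; each statement's English description precedes it below -/
import Mathlib

section
/- Let $1 \le q \le d-1$ and let $a_0 < a_1 < \cdots < a_d$ be positive reals (assortativity). Define $J_q^{td} = 2^{-d}\left(\sqrt{a_d + \sum_{k=1}^{d-q} 2^{k-1} a_{d-k}} - \sqrt{2^{d-q} a_{q-1}}\right)^2$ and $J_q^{bu} = 2^{-d}\left((\sqrt{a_{q-1}} - \sqrt{a_d})^2 + \sum_{k=1}^{d-q} 2^{k-1}(\sqrt{a_{q-1}} - \sqrt{a_{d-k}})^2\right)$. Then $J_q^{bu} > J_q^{td}$. -/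
open Finset Real

lemma sqrt_add_le' (A B : ℝ) (hA : 0 ≤ A) (hB : 0 ≤ B) :
    Real.sqrt A + Real.sqrt B ≤ Real.sqrt (2*(A+B)) := by
  rw [show Real.sqrt A + Real.sqrt B = Real.sqrt ((Real.sqrt A + Real.sqrt B)^2) from
    (Real.sqrt_sq (by positivity)).symm]
  apply Real.sqrt_le_sqrt
  nlinarith [Real.sq_sqrt hA, Real.sq_sqrt hB, sq_nonneg (Real.sqrt A - Real.sqrt B)]

lemma sqrt_add_lt' (A B : ℝ) (hA : 0 ≤ A) (hB : 0 ≤ B) (hne : A ≠ B) :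
    Real.sqrt A + Real.sqrt B < Real.sqrt (2*(A+B)) := by
  have hne' : Real.sqrt A ≠ Real.sqrt B := fun h => hne (by
    rw [← Real.sq_sqrt hA, ← Real.sq_sqrt hB, h])
  have h0 : 0 < (Real.sqrt A - Real.sqrt B)^2 := by
    have := sub_ne_zero.mpr hne'
    positivity
  have h2 : (Real.sqrt A + Real.sqrt B)^2 < 2*(A+B) := by
    nlinarith [Real.sq_sqrt hA, Real.sq_sqrt hB]
  have := Real.sqrt_lt_sqrt (by positivity) h2
  rwa [Real.sqrt_sq (by positivity)] at this

lemma gsum (m : ℕ) : ∑ k ∈ Finset.Icc 1 m, (2:ℝ)^(k-1) = 2^m - 1 := by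
  induction m with
  | zero => simp
  | succ n ih =>
    rw [Finset.sum_Icc_succ_top (by omega), ih, Nat.add_sub_cancel]
    ring

lemma aux (b : ℕ → ℝ) (hne : b 1 < b 0) :
    ∀ m, 1 ≤ m → (∀ k, k ≤ m → 0 < b k) →
      Real.sqrt (b 0) + ∑ k ∈ Finset.Icc 1 m, (2:ℝ)^(k-1) * Real.sqrt (b k)
        < Real.sqrt (2^m * (b 0 + ∑ k ∈ Finset.Icc 1 m, (2:ℝ)^(k-1) * b k)) := by
  intro m hm
  induction m, hm using Nat.le_induction with
  | base =>
    intro hpos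
    simp only [Finset.Icc_self, Finset.sum_singleton, pow_one, Nat.sub_self, pow_zero, one_mul]
    have := sqrt_add_lt' (b 0) (b 1) (hpos 0 (by omega)).le (hpos 1 le_rfl).le (by linarith)
    linarith [this]
  | succ n hn ih =>
    intro hpos
    have hS : 0 < b 0 + ∑ k ∈ Finset.Icc 1 n, (2:ℝ)^(k-1) * b k := by
      have h0 := hpos 0 (by omega)
      have : 0 ≤ ∑ k ∈ Finset.Icc 1 n, (2:ℝ)^(k-1) * b k :=
        Finset.sum_nonneg fun k hk => by
          have := hpos k (le_trans (Finset.mem_Icc.mp hk).2 (by omega))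
          positivity
      linarith
    have ih' := ih (fun k hk => hpos k (by omega))
    rw [Finset.sum_Icc_succ_top (by omega : 1 ≤ n+1), Finset.sum_Icc_succ_top (by omega : 1 ≤ n+1),
      Nat.add_sub_cancel]
    set S := b 0 + ∑ k ∈ Finset.Icc 1 n, (2:ℝ)^(k-1) * b k with hSdef
    have hb : 0 < b (n+1) := hpos (n+1) le_rfl
    have step1 : Real.sqrt (b 0) + (∑ k ∈ Finset.Icc 1 n, (2:ℝ)^(k-1) * Real.sqrt (b k))
        + 2^n * Real.sqrt (b (n+1)) < Real.sqrt (2^n * S) + 2^n * Real.sqrt (b (n+1)) := by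
      linarith
    have key : Real.sqrt (2^n * S) + 2^n * Real.sqrt (b (n+1))
        ≤ Real.sqrt (2^(n+1) * (S + 2^n * b (n+1))) := by
      have e1 : Real.sqrt (2^n * S) = Real.sqrt (2^n) * Real.sqrt S :=
        Real.sqrt_mul (by positivity) _
      have e2 : (2:ℝ)^n * Real.sqrt (b (n+1)) = Real.sqrt (2^n) * Real.sqrt (2^n * b (n+1)) := by
        rw [Real.sqrt_mul (by positivity : (0:ℝ) ≤ 2^n)]
        rw [← mul_assoc, Real.mul_self_sqrt (by positivity : (0:ℝ) ≤ 2^n)]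
      have e3 : Real.sqrt (2^(n+1) * (S + 2^n * b (n+1)))
          = Real.sqrt (2^n) * Real.sqrt (2 * (S + 2^n * b (n+1))) := by
        rw [← Real.sqrt_mul (by positivity : (0:ℝ) ≤ 2^n)]
        congr 1
        ring
      rw [e1, e2, e3, ← mul_add]
      apply mul_le_mul_of_nonneg_left _ (Real.sqrt_nonneg _)
      exact sqrt_add_le' S (2^n * b (n+1)) hS.le (by positivity)
    calc Real.sqrt (b 0) + ((∑ k ∈ Finset.Icc 1 n, (2:ℝ)^(k-1) * Real.sqrt (b k))
          + 2^n * Real.sqrt (b (n+1)))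
        < Real.sqrt (2^n * S) + 2^n * Real.sqrt (b (n+1)) := by linarith
      _ ≤ Real.sqrt (2^(n+1) * (S + 2^n * b (n+1))) := key
      _ = Real.sqrt (2^(n+1) * (b 0 + ((∑ k ∈ Finset.Icc 1 n, (2:ℝ)^(k-1) * b k)
          + 2^n * b (n+1)))) := by congr 1; ring

/-- Bottom-up beats top-down: under assortativity `a 0 < a 1 < ⋯ < a d` (positive reals)
and `1 ≤ q ≤ d - 1`, we have `J_q^{bu} > J_q^{td}`. -/
theorem stmt1 (d q : ℕ) (a : ℕ → ℝ)
    (hq : 1 ≤ q) (hqd : q ≤ d - 1) (hd : 2 ≤ d)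
    (hpos : ∀ k, k ≤ d → 0 < a k)
    (hmono : ∀ i j, i < j → j ≤ d → a i < a j) :
    ((2 : ℝ) ^ d)⁻¹ *
        ((Real.sqrt (a (q - 1)) - Real.sqrt (a d)) ^ 2
          + ∑ k ∈ Finset.Icc 1 (d - q),
              (2 : ℝ) ^ (k - 1) * (Real.sqrt (a (q - 1)) - Real.sqrt (a (d - k))) ^ 2)
      > ((2 : ℝ) ^ d)⁻¹ *
          (Real.sqrt (a d + ∑ k ∈ Finset.Icc 1 (d - q), (2 : ℝ) ^ (k - 1) * a (d - k))
            - Real.sqrt ((2 : ℝ) ^ (d - q) * a (q - 1))) ^ 2 := by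
  set m := d - q with hm
  have hm1 : 1 ≤ m := by omega
  set s := Real.sqrt (a (q - 1)) with hs
  have hq1pos : 0 < a (q - 1) := hpos (q - 1) (by omega)
  have hspos : 0 < s := Real.sqrt_pos.mpr hq1pos
  have hs2 : s ^ 2 = a (q - 1) := Real.sq_sqrt hq1pos.le
  set sA := ∑ k ∈ Finset.Icc 1 m, (2:ℝ)^(k-1) * Real.sqrt (a (d - k)) with hsA
  set sB := ∑ k ∈ Finset.Icc 1 m, (2:ℝ)^(k-1) * a (d - k) with hsB
  set S := a d + sB with hSdef
  set T := Real.sqrt (a d) + sA with hT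
  have hSpos : 0 < S := by
    have : 0 ≤ sB := Finset.sum_nonneg fun k hk => by
      have := hpos (d - k) (Nat.sub_le d k)
      positivity
    have := hpos d le_rfl
    rw [hSdef]; linarith
  -- key inequality
  have hK : T < Real.sqrt (2^m * S) := by
    have := aux (fun k => a (d - k)) (by
      simpa using hmono (d - 1) d (by omega) le_rfl) m hm1
      (fun k hk => hpos (d - k) (Nat.sub_le d k))
    simpa [hT, hsA, hSdef, hsB] using this
  -- expand LHS
  have hLHS : (s - Real.sqrt (a d)) ^ 2
      + ∑ k ∈ Finset.Icc 1 m, (2:ℝ)^(k-1) * (s - Real.sqrt (a (d - k))) ^ 2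
      = 2^m * s^2 + S - 2 * s * T := by
    have hexp : ∑ k ∈ Finset.Icc 1 m, (2:ℝ)^(k-1) * (s - Real.sqrt (a (d - k))) ^ 2
        = (∑ k ∈ Finset.Icc 1 m, (2:ℝ)^(k-1)) * s^2 - 2 * s * sA + sB := by
      rw [hsA, hsB, Finset.sum_mul, Finset.mul_sum, ← Finset.sum_sub_distrib,
        ← Finset.sum_add_distrib]
      apply Finset.sum_congr rfl
      intro k hk
      have hpk : 0 ≤ a (d - k) := (hpos (d - k) (Nat.sub_le d k)).le
      rw [sub_sq, Real.sq_sqrt hpk]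
      ring
    rw [hexp, gsum m]
    have had : Real.sqrt (a d) ^ 2 = a d := Real.sq_sqrt (hpos d le_rfl).le
    rw [hSdef, hT]
    nlinarith [had]
  -- expand RHS
  have hRHS : (Real.sqrt S - Real.sqrt ((2:ℝ)^m * a (q - 1))) ^ 2
      = 2^m * s^2 + S - 2 * s * Real.sqrt (2^m * S) := by
    have e1 : Real.sqrt ((2:ℝ)^m * a (q - 1)) = Real.sqrt (2^m) * s := by
      rw [hs, Real.sqrt_mul (by positivity)]
    have e2 : Real.sqrt ((2:ℝ)^m * S) = Real.sqrt (2^m) * Real.sqrt S := by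
      rw [Real.sqrt_mul (by positivity)]
    have e3 : Real.sqrt S ^ 2 = S := Real.sq_sqrt hSpos.le
    have e4 : Real.sqrt ((2:ℝ)^m) ^ 2 = 2^m := Real.sq_sqrt (by positivity)
    rw [e1, e2]
    nlinarith [e3, e4]
  have hbracket : (Real.sqrt S - Real.sqrt ((2:ℝ)^m * a (q - 1))) ^ 2
      < (s - Real.sqrt (a d)) ^ 2
        + ∑ k ∈ Finset.Icc 1 m, (2:ℝ)^(k-1) * (s - Real.sqrt (a (d - k))) ^ 2 := by
    rw [hLHS, hRHS]
    nlinarith [hK, hspos]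
  have h2d : (0:ℝ) < ((2:ℝ)^d)⁻¹ := by positivity
  exact mul_lt_mul_of_pos_left hbracket h2d
end

section
/- Let $0 < p_{q-1} < p_q < \cdots < p_d < 1$ (assortativity) and define $H_s = \frac{1}{K}\left(D_{1/2}(p_s, p_d) + \sum_{k=1}^{d-s-1} 2^{k-1} D_{1/2}(p_s, p_{d-k})\right)$ for $0 \le s \le d-1$, where $D_{1/2}(p,q) = -2\log(\sqrt{(1-p)(1-q)} + \sqrt{pq})$ and $K = 2^d$. Then $s \mapsto H_s$ is strictly decreasing on $\{0, 1, \ldots, d-1\}$, and hence $\min_{0 \le s \le q-1} H_s = H_{q-1}$. -/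
open Finset Real


lemma g_mono (a b r : ℝ) (ha : 0 < a) (hab : a < b) (hbr : b < r) (hr1 : r < 1) :
    Real.sqrt ((1 - a) * (1 - r)) + Real.sqrt (a * r)
      < Real.sqrt ((1 - b) * (1 - r)) + Real.sqrt (b * r) := by
  have ha1 : a < 1 := by linarith
  have hb1 : b < 1 := by linarith
  have hr0 : 0 < r := by linarith
  have hb0 : 0 < b := by linarith
  rw [Real.sqrt_mul (by linarith), Real.sqrt_mul (by linarith),
      Real.sqrt_mul (by linarith), Real.sqrt_mul (by linarith)]
  set sa := Real.sqrt a with hsa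
  set sb := Real.sqrt b with hsb
  set sr := Real.sqrt r with hsr
  set ta := Real.sqrt (1 - a) with hta
  set tb := Real.sqrt (1 - b) with htb
  set tr := Real.sqrt (1 - r) with htr
  have h1 : tr * sa < sr * ta := by
    rw [← Real.sqrt_mul (by linarith), ← Real.sqrt_mul (by linarith)]
    exact Real.sqrt_lt_sqrt (by nlinarith) (by nlinarith)
  have h2 : tr * sb < sr * tb := by
    rw [← Real.sqrt_mul (by linarith), ← Real.sqrt_mul (by linarith)]
    exact Real.sqrt_lt_sqrt (by nlinarith) (by nlinarith)
  have hab' : sa < sb := Real.sqrt_lt_sqrt ha.le hab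
  have hba' : tb < ta := Real.sqrt_lt_sqrt (by linarith) (by linarith)
  have e1 : sa ^ 2 = a := Real.sq_sqrt ha.le
  have e2 : sb ^ 2 = b := Real.sq_sqrt hb0.le
  have e3 : ta ^ 2 = 1 - a := Real.sq_sqrt (by linarith)
  have e4 : tb ^ 2 = 1 - b := Real.sq_sqrt (by linarith)
  have pa : 0 < sa := Real.sqrt_pos.mpr ha
  have pb : 0 < sb := Real.sqrt_pos.mpr hb0
  have ptr : 0 ≤ tr := Real.sqrt_nonneg _
  have hd : 0 < ta - tb := sub_pos.mpr hba'
  have h3 : (ta - tb) * (tr * sa) + (ta - tb) * (tr * sb)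
      < (ta - tb) * (sr * ta) + (ta - tb) * (sr * tb) :=
    add_lt_add (mul_lt_mul_of_pos_left h1 hd) (mul_lt_mul_of_pos_left h2 hd)
  have h4 : (ta - tb) * (sr * ta) + (ta - tb) * (sr * tb) = (sr * (sb - sa)) * (sa + sb) := by
    linear_combination sr * e3 - sr * e4 - sr * e2 + sr * e1
  have h5 : (ta - tb) * (tr * sa) + (ta - tb) * (tr * sb) = (tr * (ta - tb)) * (sa + sb) := by
    ring
  have h6 : (tr * (ta - tb)) * (sa + sb) < (sr * (sb - sa)) * (sa + sb) := by
    rw [← h5, ← h4]; exact h3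
  have key : tr * (ta - tb) < sr * (sb - sa) := lt_of_mul_lt_mul_right h6 (by positivity)
  nlinarith [key]

lemma g_le_one (x y : ℝ) (hx0 : 0 ≤ x) (hx1 : x ≤ 1) (hy0 : 0 ≤ y) (hy1 : y ≤ 1) :
    Real.sqrt ((1 - x) * (1 - y)) + Real.sqrt (x * y) ≤ 1 := by
  set A := Real.sqrt ((1 - x) * (1 - y)) with hA
  set B := Real.sqrt (x * y) with hB
  have hA0 : 0 ≤ A := Real.sqrt_nonneg _
  have hB0 : 0 ≤ B := Real.sqrt_nonneg _
  have eA : A ^ 2 = (1 - x) * (1 - y) := Real.sq_sqrt (by nlinarith)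
  have eB : B ^ 2 = x * y := Real.sq_sqrt (by nlinarith)
  set C := Real.sqrt ((1 - x) * y) with hC
  set D := Real.sqrt (x * (1 - y)) with hD
  have eC : C ^ 2 = (1 - x) * y := Real.sq_sqrt (by nlinarith)
  have eD : D ^ 2 = x * (1 - y) := Real.sq_sqrt (by nlinarith)
  have hAB : A * B = C * D := by
    rw [hA, hB, hC, hD, ← Real.sqrt_mul (by nlinarith), ← Real.sqrt_mul (by nlinarith)]
    ring_nf
  nlinarith [sq_nonneg (C - D), sq_nonneg (A + B - 1), sq_nonneg (A + B)]

lemma D_nonneg (x y : ℝ) (hx0 : 0 ≤ x) (hx1 : x ≤ 1) (hy0 : 0 ≤ y) (hy1 : y ≤ 1) :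
    0 ≤ -2 * Real.log (Real.sqrt ((1 - x) * (1 - y)) + Real.sqrt (x * y)) := by
  have h := Real.log_nonpos (by positivity) (g_le_one x y hx0 hx1 hy0 hy1)
  linarith

lemma D_mono (a b r : ℝ) (ha : 0 < a) (hab : a < b) (hbr : b < r) (hr1 : r < 1) :
    -2 * Real.log (Real.sqrt ((1 - b) * (1 - r)) + Real.sqrt (b * r))
      < -2 * Real.log (Real.sqrt ((1 - a) * (1 - r)) + Real.sqrt (a * r)) := by
  have hg := g_mono a b r ha hab hbr hr1
  have hpos : 0 < Real.sqrt ((1 - a) * (1 - r)) + Real.sqrt (a * r) := by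
    have : 0 < Real.sqrt (a * r) := Real.sqrt_pos.mpr (by nlinarith)
    have := Real.sqrt_nonneg ((1 - a) * (1 - r))
    linarith
  have := Real.log_lt_log hpos hg
  linarith

/-- For an assortative balanced BTSBM, the Chernoff–Hellinger divergence
`H s = (1/K)(D_{1/2}(p s, p d) + ∑_{k=1}^{d-s-1} 2^{k-1} D_{1/2}(p s, p (d-k)))`
is strictly decreasing in `s` on `{0, …, d-1}`, and hence for every `1 ≤ q ≤ d`,
`min_{0 ≤ s ≤ q-1} H s = H (q-1)`. -/
theorem stmt7 (d : ℕ) (hd : 1 ≤ d) (p : ℕ → ℝ)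
    (hpos : 0 < p 0) (hlt1 : p d < 1)
    (hmono : ∀ i j, i < j → j ≤ d → p i < p j)
    (H : ℕ → ℝ)
    (hH : ∀ s, H s = (1 / (2 : ℝ) ^ d) *
      ((-2 * Real.log (Real.sqrt ((1 - p s) * (1 - p d)) + Real.sqrt (p s * p d)))
        + ∑ k ∈ Finset.Icc 1 (d - s - 1), (2 : ℝ) ^ (k - 1) *
            (-2 * Real.log (Real.sqrt ((1 - p s) * (1 - p (d - k)))
              + Real.sqrt (p s * p (d - k)))))) :
    (∀ s t : ℕ, s < t → t ≤ d - 1 → H t < H s) ∧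
    ∀ q : ℕ, 1 ≤ q → q ≤ d →
      (Finset.Icc 0 (q - 1)).inf' (Finset.nonempty_Icc.mpr (Nat.zero_le _)) H = H (q - 1) := by
  have hp0 : ∀ i, i ≤ d → 0 < p i := by
    intro i hi
    rcases Nat.eq_zero_or_pos i with h | h
    · subst h; exact hpos
    · exact hpos.trans (hmono 0 i h hi)
  have hp1 : ∀ i, i ≤ d → p i < 1 := by
    intro i hi
    rcases eq_or_lt_of_le hi with h | h
    · subst h; exact hlt1
    · exact (hmono i d h le_rfl).trans hlt1
  have part1 : ∀ s t : ℕ, s < t → t ≤ d - 1 → H t < H s := by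
    intro s t hst htd
    have htd' : t < d := by omega
    have hsd : s < d := by omega
    rw [hH s, hH t]
    have hc : (0 : ℝ) < 1 / (2 : ℝ) ^ d := by positivity
    apply mul_lt_mul_of_pos_left _ hc
    have hps : 0 < p s := hp0 s hsd.le
    have hpst : p s < p t := hmono s t hst htd'.le
    have head : -2 * Real.log (Real.sqrt ((1 - p t) * (1 - p d)) + Real.sqrt (p t * p d))
        < -2 * Real.log (Real.sqrt ((1 - p s) * (1 - p d)) + Real.sqrt (p s * p d)) :=
      D_mono (p s) (p t) (p d) hps hpst (hmono t d htd' le_rfl) hlt1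
    have step1 : ∑ k ∈ Finset.Icc 1 (d - t - 1), (2 : ℝ) ^ (k - 1) *
            (-2 * Real.log (Real.sqrt ((1 - p t) * (1 - p (d - k)))
              + Real.sqrt (p t * p (d - k))))
        ≤ ∑ k ∈ Finset.Icc 1 (d - t - 1), (2 : ℝ) ^ (k - 1) *
            (-2 * Real.log (Real.sqrt ((1 - p s) * (1 - p (d - k)))
              + Real.sqrt (p s * p (d - k)))) := by
      apply Finset.sum_le_sum
      intro k hk
      rw [Finset.mem_Icc] at hk
      have h1 : t < d - k := by omega
      have h2 : d - k ≤ d := by omega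
      have h3 : d - k < d := by omega
      apply mul_le_mul_of_nonneg_left _ (by positivity)
      exact (D_mono (p s) (p t) (p (d - k)) hps hpst (hmono t (d - k) h1 h2)
        (hp1 (d - k) h2)).le
    have step2 : ∑ k ∈ Finset.Icc 1 (d - t - 1), (2 : ℝ) ^ (k - 1) *
            (-2 * Real.log (Real.sqrt ((1 - p s) * (1 - p (d - k)))
              + Real.sqrt (p s * p (d - k))))
        ≤ ∑ k ∈ Finset.Icc 1 (d - s - 1), (2 : ℝ) ^ (k - 1) *
            (-2 * Real.log (Real.sqrt ((1 - p s) * (1 - p (d - k)))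
              + Real.sqrt (p s * p (d - k)))) := by
      apply Finset.sum_le_sum_of_subset_of_nonneg
      · exact Finset.Icc_subset_Icc_right (by omega)
      · intro k hk _
        rw [Finset.mem_Icc] at hk
        have h2 : d - k ≤ d := by omega
        apply mul_nonneg (by positivity)
        exact D_nonneg (p s) (p (d - k)) hps.le (hp1 s hsd.le).le
          (hp0 (d - k) h2).le (hp1 (d - k) h2).le
    exact add_lt_add_of_lt_of_le head (step1.trans step2)
  refine ⟨part1, ?_⟩
  intro q hq hqd
  apply le_antisymm
  · exact Finset.inf'_le H (Finset.mem_Icc.mpr ⟨Nat.zero_le _, le_rfl⟩)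
  · apply Finset.le_inf'
    intro b hb
    rw [Finset.mem_Icc] at hb
    rcases eq_or_lt_of_le hb.2 with h | h
    · subst h; exact le_rfl
    · exact (part1 b (q - 1) h (by omega)).le
end
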